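/- Let T be an ergodic invertible measure-preserving transformation of a probability space (X, μ). Let W^s : X → subsets of X be a measurable T-equivariant family (T(W^s(x)) ⊆ W^s(Tx)) and let z ∈ X be such that {x : x ∈ W^s(z)} has the property that whenever T^{n}x ∈ W^s(z) for two integers n₁ < n₂ we have T^{n₂−n₁}(W^s(z)) ⊆ W^s(z), and all points of W^s(z) then converge to a single periodic orbit. If μ gives positive measure to the set of x with infinitely many n ≥ 0 such that T^n x ∈ W^s(z), then μ is atomic (its ergodic decomposition has an atom). -/
import Mathlib


open MeasureTheory Filter

/-- Recurrence argument: for an ergodic invertible measure-preserving map, if an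
equivariant family of (stable) sets is such that two visits of an orbit to `W z` force an
iterate of `T` to map `W z` into itself, and such an invariance forces all points of `W z`
to converge to a single periodic orbit, then positive measure of the set of points visiting
`W z` infinitely often forces `μ` to have an atom. -/
theorem recurrent_visits_to_stable_set_implies_atom
    {X : Type*} [MetricSpace X] [MeasurableSpace X] [BorelSpace X]
    (μ : Measure X) [IsProbabilityMeasure μ]
    (T S : X → X) (hTS : Function.LeftInverse S T) (hST : Function.RightInverse S T)
    (hT : MeasurePreserving T μ μ) (hErg : Ergodic T μ)
    (W : X → Set X) (hequiv : ∀ x, T '' (W x) ⊆ W (T x))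
    (z : X) (hWz : MeasurableSet (W z))
    (hrec : ∀ n₁ n₂ : ℕ, n₁ < n₂ → (∃ x : X, T^[n₁] x ∈ W z ∧ T^[n₂] x ∈ W z) →
      T^[n₂ - n₁] '' (W z) ⊆ W z)
    (hconv : (∃ m : ℕ, 0 < m ∧ T^[m] '' (W z) ⊆ W z) →
      ∃ p : X, (∃ q : ℕ, 0 < q ∧ T^[q] p = p) ∧
        ∀ y ∈ W z, Tendsto (fun n : ℕ => dist (T^[n] y) (T^[n] p)) atTop (nhds 0))
    (hpos : 0 < μ {x : X | {n : ℕ | T^[n] x ∈ W z}.Infinite}) :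
    ∃ p : X, μ {p} ≠ 0 := by
  classical
  set V := {x : X | {n : ℕ | T^[n] x ∈ W z}.Infinite} with hVdef
  obtain ⟨x₀, hx₀⟩ := nonempty_of_measure_ne_zero hpos.ne'
  obtain ⟨n₁, hn₁⟩ := hx₀.nonempty
  obtain ⟨n₂, hn₂, hlt⟩ := hx₀.exists_gt n₁
  have hm : T^[n₂ - n₁] '' (W z) ⊆ W z := hrec n₁ n₂ hlt ⟨x₀, hn₁, hn₂⟩
  obtain ⟨p, ⟨q, hq, hTq⟩, hten⟩ := hconv ⟨n₂ - n₁, Nat.sub_pos_of_lt hlt, hm⟩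
  set P : Set X := (fun i => T^[i] p) '' Set.Iio q with hPdef
  have hPfin : P.Finite := (Set.finite_Iio q).image _
  have hper : Function.IsPeriodicPt T q p := hTq
  have horb : ∀ k : ℕ, T^[k] p ∈ P := by
    intro k
    have : T^[k % q] p = T^[k] p := hper.iterate_mod_apply k
    rw [← this]
    exact ⟨k % q, Nat.mod_lt _ hq, rfl⟩
  -- for every ε > 0, μ V ≤ μ (thickening ε P)
  have key : ∀ ε : ℝ, 0 < ε → μ V ≤ μ (Metric.thickening ε P) := by
    intro ε hε
    set U := Metric.thickening ε P with hUdef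
    have hUmeas : MeasurableSet U := Metric.isOpen_thickening.measurableSet
    set A : ℕ → Set X := fun m => ⋂ n ∈ Set.Ici m, (T^[n]) ⁻¹' U with hAdef
    have hAmono : Monotone A := by
      intro a b hab
      exact Set.biInter_mono (Set.Ici_subset_Ici.2 hab) fun _ _ => le_rfl
    have hVsub : V ⊆ ⋃ m, A m := by
      intro x hx
      obtain ⟨n₀, hn₀⟩ := (hx : {n : ℕ | T^[n] x ∈ W z}.Infinite).nonempty
      have hy : T^[n₀] x ∈ W z := hn₀
      have := (hten _ hy).eventually (eventually_lt_nhds hε : ∀ᶠ d in nhds (0:ℝ), d < ε)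
      obtain ⟨K, hK⟩ := eventually_atTop.1 this
      refine Set.mem_iUnion.2 ⟨n₀ + K, ?_⟩
      refine Set.mem_biInter fun n hn => ?_
      have hn' : n₀ + K ≤ n := hn
      have hkn : K ≤ n - n₀ := by omega
      have hiter : T^[n] x = T^[n - n₀] (T^[n₀] x) := by
        rw [← Function.iterate_add_apply]
        congr 1
        omega
      have hd : dist (T^[n - n₀] (T^[n₀] x)) (T^[n - n₀] p) < ε := hK _ hkn
      have : T^[n] x ∈ U := by
        rw [hiter]
        exact Metric.mem_thickening_iff.2 ⟨T^[n - n₀] p, horb _, hd⟩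
      exact this
    calc μ V ≤ μ (⋃ m, A m) := measure_mono hVsub
      _ = ⨆ m, μ (A m) := Directed.measure_iUnion hAmono.directed_le
      _ ≤ μ U := by
          refine iSup_le fun m => ?_
          calc μ (A m) ≤ μ ((T^[m]) ⁻¹' U) :=
                measure_mono (Set.biInter_subset_of_mem (Set.self_mem_Ici))
            _ = μ U := (hT.iterate m).measure_preimage hUmeas.nullMeasurableSet
  -- μ P ≥ μ V
  have hPinter : P = ⋂ n : ℕ, Metric.thickening (1 / (n + 1 : ℝ)) P := by
    apply Set.Subset.antisymm
    · refine Set.subset_iInter fun n => ?_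
      exact Metric.self_subset_thickening (by positivity) P
    · intro x hx
      have hx' : x ∈ closure P := by
        rw [Metric.mem_closure_iff]
        intro ε hε
        obtain ⟨n, hn⟩ := exists_nat_one_div_lt hε
        have := Set.mem_iInter.1 hx n
        obtain ⟨y, hy, hd⟩ := Metric.mem_thickening_iff.1 this
        exact ⟨y, hy, hd.trans hn⟩
      rwa [hPfin.isClosed.closure_eq] at hx'
  have hPmeas : μ V ≤ μ P := by
    rw [hPinter]
    have hanti : Antitone fun n : ℕ => Metric.thickening (1 / (n + 1 : ℝ)) P := by
      intro a b hab
      apply Metric.thickening_mono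
      have : (a + 1 : ℝ) ≤ b + 1 := by exact_mod_cast Nat.succ_le_succ hab
      exact one_div_le_one_div_of_le (by positivity) this
    rw [Directed.measure_iInter (fun n => Metric.isOpen_thickening.measurableSet.nullMeasurableSet)
      hanti.directed_ge ⟨0, measure_ne_top μ _⟩]
    exact le_iInf fun n => key _ (by positivity)
  -- conclude: some point of P is an atom
  by_contra hno
  push_neg at hno
  have hP0 : μ P = 0 := by
    have : P = ⋃ y ∈ P, {y} := (Set.biUnion_of_singleton P).symm
    rw [this]
    exact (measure_biUnion_null_iff hPfin.countable).2 fun y _ => hno y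
  exact absurd (hpos.trans_le (hPmeas.trans_eq hP0)) (lt_irrefl 0)
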